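/- Let (X,d) be an Hadamard space and let f : X → ℝ ∪ {+∞} be proper, λ-convex and lower semicontinuous for some λ ∈ ℝ. Let γ : [0,1] → X be an absolutely continuous curve with ∫₀¹ |γ̇|²(t) + |∂f|²(γ(t)) dt < +∞. Then sup_{t ∈ [0,1]} d( J_τ^f γ(t), γ(t) ) → 0 as τ ↘ 0, where J_τ^f denotes the (single-valued, for τ ∈ (0, 1/(2λ⁻))) resolvent of f. -/

import Mathlib

open Filter Topology MeasureTheory
open scoped ENNReal NNReal Classical

section Defs

variable {X : Type*} [MetricSpace X]

/-- The descending slope `|∂f|(x)` of `f : X → ℝ ∪ {+∞}`.  It is `+∞` outside of the effective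
domain, and otherwise `limsup_{y → x} (f x - f y)⁺ / d(y,x)` (which is `0` at isolated points,
since then the limsup is taken along the bottom filter). -/
noncomputable def descSlope (f : X → EReal) (x : X) : ℝ≥0∞ :=
  if f x = ⊤ then ⊤
  else Filter.limsup (fun y => ENNReal.ofReal (((f x - f y) ⊔ 0).toReal / dist y x)) (𝓝[≠] x)

/-- The (upper) metric speed of a curve at a point: where the metric derivative
`lim_{s → t} d(γ s, γ t)/|s - t|` exists, it coincides with this limsup. -/
noncomputable def mSpeed (γ : ℝ → X) (t : ℝ) : ℝ≥0∞ :=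
  Filter.limsup (fun s => ENNReal.ofReal (dist (γ s) (γ t) / |s - t|)) (𝓝[≠] t)

/-- A curve is absolutely continuous on `[a,b]` if its increments are controlled by the
integral of some nonnegative integrable function. -/
def IsACCurveOn (γ : ℝ → X) (a b : ℝ) : Prop :=
  ∃ g : ℝ → ℝ, MeasureTheory.IntegrableOn g (Set.Icc a b) ∧ (∀ t, 0 ≤ g t) ∧
    ∀ s t : ℝ, a ≤ s → s ≤ t → t ≤ b → dist (γ s) (γ t) ≤ ∫ r in s..t, g r

/-- The action integral `∫₀¹ |γ̇|²(t) + |∂f|²(γ(t)) dt`. -/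
noncomputable def actionIntegral (f : X → EReal) (γ : ℝ → X) : ℝ≥0∞ :=
  ∫⁻ t in Set.Ioo (0:ℝ) 1, ((mSpeed γ t) ^ 2 + (descSlope f (γ t)) ^ 2)

/-- The action functional `Θ^f_{x₀,x₁}`. -/
noncomputable def Theta (f : X → EReal) (x₀ x₁ : X) (γ : ℝ → X) : ℝ≥0∞ :=
  if IsACCurveOn γ 0 1 ∧ γ 0 = x₀ ∧ γ 1 = x₁ then actionIntegral f γ else ⊤

/-- `γ : [0,1] → X` is a constant speed geodesic. -/
def IsGeodesic (γ : ℝ → X) : Prop :=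
  ∀ s ∈ Set.Icc (0:ℝ) 1, ∀ t ∈ Set.Icc (0:ℝ) 1,
    dist (γ s) (γ t) = |s - t| * dist (γ 0) (γ 1)

/-- Every pair of points is joined by a constant speed geodesic. -/
def GeodesicSp (X : Type*) [MetricSpace X] : Prop :=
  ∀ x y : X, ∃ γ : ℝ → X, IsGeodesic γ ∧ γ 0 = x ∧ γ 1 = y

/-- `X` is a CAT(0) space. -/
def IsCAT0 (X : Type*) [MetricSpace X] : Prop :=
  GeodesicSp X ∧ ∀ (y : X) (γ : ℝ → X), IsGeodesic γ → ∀ t ∈ Set.Icc (0:ℝ) 1,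
    dist y (γ t) ^ 2 ≤ (1 - t) * dist y (γ 0) ^ 2 + t * dist y (γ 1) ^ 2
      - t * (1 - t) * dist (γ 0) (γ 1) ^ 2

/-- `f` is `λ`-convex along every constant speed geodesic. -/
def LambdaConvex (f : X → EReal) (lam : ℝ) : Prop :=
  ∀ γ : ℝ → X, IsGeodesic γ → ∀ t ∈ Set.Icc (0:ℝ) 1,
    f (γ t) ≤ ((1 - t : ℝ) : EReal) * f (γ 0) + ((t : ℝ) : EReal) * f (γ 1)
      - ((lam / 2 * t * (1 - t) * dist (γ 0) (γ 1) ^ 2 : ℝ) : EReal)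

/-- The resolvent `J_τ^f x`: the set of minimizers of `y ↦ f y + d(y,x)²/(2τ)`. -/
def resolvSet (f : X → EReal) (τ : ℝ) (x : X) : Set X :=
  {u | ∀ y : X, f u + ((dist u x ^ 2 / (2 * τ) : ℝ) : EReal)
      ≤ f y + ((dist y x ^ 2 / (2 * τ) : ℝ) : EReal)}

def IsBoundedSeq (u : ℕ → X) : Prop := ∃ R : ℝ, ∀ n, dist (u n) (u 0) ≤ R

/-- `x` is the asymptotic centre of the (bounded) sequence `u`, i.e. the unique minimizer of
`y ↦ limsup_n d(y, u n)²`. -/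
def IsAsympCentre (u : ℕ → X) (x : X) : Prop :=
  ∀ y : X, y ≠ x →
    Filter.limsup (fun n => dist x (u n) ^ 2) Filter.atTop
      < Filter.limsup (fun n => dist y (u n) ^ 2) Filter.atTop

/-- Weak convergence: `u` is bounded and `x` is the asymptotic centre of every subsequence. -/
def WeakConv (u : ℕ → X) (x : X) : Prop :=
  IsBoundedSeq u ∧ ∀ φ : ℕ → ℕ, StrictMono φ → IsAsympCentre (u ∘ φ) x

/-- Mosco convergence of `F h` to `f`. -/
def MoscoConv (F : ℕ → X → EReal) (f : X → EReal) : Prop :=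
  (∀ (u : ℕ → X) (x : X), WeakConv u x →
      f x ≤ Filter.liminf (fun h => F h (u h)) Filter.atTop) ∧
  (∀ x : X, ∃ u : ℕ → X, Filter.Tendsto u Filter.atTop (𝓝 x) ∧
      Filter.limsup (fun h => F h (u h)) Filter.atTop ≤ f x)

/-- (Metric) Γ-convergence of `F h` to `f`. -/
def GammaConvSeq (F : ℕ → X → EReal) (f : X → EReal) : Prop :=
  (∀ (u : ℕ → X) (x : X), Filter.Tendsto u Filter.atTop (𝓝 x) →
      f x ≤ Filter.liminf (fun h => F h (u h)) Filter.atTop) ∧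
  (∀ x : X, ∃ u : ℕ → X, Filter.Tendsto u Filter.atTop (𝓝 x) ∧
      Filter.limsup (fun h => F h (u h)) Filter.atTop ≤ f x)

/-- Assumption 2.4.5 of Ambrosio-Gigli-Savaré: convexity of the Moreau-Yosida perturbations
along some curve, with base point `x₀`. -/
def AssumptionA1 (f : X → EReal) (lam : ℝ) : Prop :=
  ∀ x₀ x₁ : X, f x₀ ≠ ⊤ → f x₁ ≠ ⊤ →
    ∃ γ : ℝ → X, γ 0 = x₀ ∧ γ 1 = x₁ ∧
      ∀ τ : ℝ, 0 < τ → τ * max (-lam) 0 < 1 →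
        ∀ t ∈ Set.Icc (0:ℝ) 1,
          f (γ t) ≤ (((1 - t) * (f x₀).toReal
            + t * ((f x₁).toReal + dist x₁ x₀ ^ 2 / (2 * τ))
            - (1 / 2) * (lam + 1 / τ) * t * (1 - t) * dist x₀ x₁ ^ 2
            - dist (γ t) x₀ ^ 2 / (2 * τ) : ℝ) : EReal)

/-- Assumption 4.0.1 of Ambrosio-Gigli-Savaré: convexity of the Moreau-Yosida perturbations
along some curve, for every base point `y`. -/
def AssumptionA2 (f : X → EReal) (lam : ℝ) : Prop :=
  ∀ y x₀ x₁ : X, f y ≠ ⊤ → f x₀ ≠ ⊤ → f x₁ ≠ ⊤ →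
    ∃ γ : ℝ → X, γ 0 = x₀ ∧ γ 1 = x₁ ∧
      ∀ τ : ℝ, 0 < τ → τ * max (-lam) 0 < 1 →
        ∀ t ∈ Set.Icc (0:ℝ) 1,
          f (γ t) ≤ (((1 - t) * ((f x₀).toReal + dist x₀ y ^ 2 / (2 * τ))
            + t * ((f x₁).toReal + dist x₁ y ^ 2 / (2 * τ))
            - (1 / 2) * (lam + 1 / τ) * t * (1 - t) * dist x₀ x₁ ^ 2
            - dist (γ t) y ^ 2 / (2 * τ) : ℝ) : EReal)

/-- `G` is an `EVI_λ` gradient flow trajectory for `f` starting at `x`. -/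
def IsEVIFlow (f : X → EReal) (lam : ℝ) (x : X) (G : ℝ → X) : Prop :=
  G 0 = x ∧ Filter.Tendsto G (𝓝[>] (0:ℝ)) (𝓝 x) ∧
  (∀ t : ℝ, 0 < t → f (G t) ≠ ⊤) ∧
  (∀ a b : ℝ, 0 < a → a ≤ b → IsACCurveOn G a b) ∧
  ∀ v : X, f v ≠ ⊤ →
    ∀ᵐ t ∂(MeasureTheory.volume.restrict (Set.Ioi (0:ℝ))),
      ∃ L : ℝ, HasDerivAt (fun s => dist (G s) v ^ 2) L t ∧
        f (G t) + ((L / 2 + lam / 2 * dist (G t) v ^ 2 : ℝ) : EReal) ≤ f v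

/-- Γ-convergence of the functionals `Th h` to `T` on `C([0,1], X)` with respect to uniform
convergence on `[0,1]`. -/
def ThetaGammaConv (Th : ℕ → (ℝ → X) → ℝ≥0∞) (T : (ℝ → X) → ℝ≥0∞) : Prop :=
  (∀ γ : ℝ → X, ContinuousOn γ (Set.Icc 0 1) →
    ∀ Γ : ℕ → ℝ → X, (∀ h, ContinuousOn (Γ h) (Set.Icc 0 1)) →
      TendstoUniformlyOn (fun h t => Γ h t) γ Filter.atTop (Set.Icc 0 1) →
      T γ ≤ Filter.liminf (fun h => Th h (Γ h)) Filter.atTop) ∧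
  (∀ γ : ℝ → X, ContinuousOn γ (Set.Icc 0 1) →
    ∃ Γ : ℕ → ℝ → X, (∀ h, ContinuousOn (Γ h) (Set.Icc 0 1)) ∧
      TendstoUniformlyOn (fun h t => Γ h t) γ Filter.atTop (Set.Icc 0 1) ∧
      Filter.limsup (fun h => Th h (Γ h)) Filter.atTop ≤ T γ)

end Defs


section AuxLemmas

/-- Uniform absolute continuity of the integral of a nonnegative integrable function. -/
lemma aux_unif_int {g : ℝ → ℝ} (hg : MeasureTheory.IntegrableOn g (Set.Icc (0:ℝ) 1))
    (hg0 : ∀ t, 0 ≤ g t) {η : ℝ} (hη : 0 < η) :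
    ∃ δ : ℝ, 0 < δ ∧ ∀ u v : ℝ, 0 ≤ u → u ≤ v → v ≤ 1 → v - u ≤ δ →
      ∫ r in u..v, g r ≤ η := by
  set ν := volume.restrict (Set.Icc (0:ℝ) 1) with hν
  have hfin : ∫⁻ x, ENNReal.ofReal (g x) ∂ν ≠ ⊤ := by
    have h1 : MeasureTheory.HasFiniteIntegral g ν := hg.2
    rw [MeasureTheory.hasFiniteIntegral_iff_ofReal (Filter.Eventually.of_forall hg0)] at h1
    exact h1.ne
  obtain ⟨δ', hδ'pos, hδ'⟩ := MeasureTheory.exists_pos_setLIntegral_lt_of_measure_lt hfin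
      (ε := ENNReal.ofReal η) (by simp [hη, hη.le, ENNReal.ofReal_pos.2 hη, ne_of_gt])
  set m := min δ' 1 with hm
  have hm0 : m ≠ 0 := by
    simp only [hm, ne_eq, min_eq_iff]
    rintro (⟨h, -⟩ | ⟨h, -⟩) <;> simp_all [hδ'pos.ne']
  have hmtop : m ≠ ⊤ := by
    simp [hm]
  have hmpos : 0 < m.toReal := ENNReal.toReal_pos hm0 hmtop
  refine ⟨m.toReal / 2, by positivity, ?_⟩
  intro u v hu huv hv1 hlen
  have hIoc : Set.Ioc u v ⊆ Set.Icc 0 1 := fun x hx =>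
    ⟨le_trans hu hx.1.le, le_trans hx.2 hv1⟩
  have hmeas : ν (Set.Ioc u v) < δ' := by
    have h1 : ν (Set.Ioc u v) ≤ volume (Set.Ioc u v) := by
      rw [hν, Measure.restrict_apply measurableSet_Ioc]
      exact measure_mono Set.inter_subset_left
    have h2 : volume (Set.Ioc u v) = ENNReal.ofReal (v - u) := Real.volume_Ioc
    have h3 : ENNReal.ofReal (v - u) ≤ ENNReal.ofReal (m.toReal / 2) :=
      ENNReal.ofReal_le_ofReal hlen
    have h4 : ENNReal.ofReal (m.toReal / 2) < m := by
      rw [ENNReal.ofReal_lt_iff_lt_toReal (by positivity) hmtop]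
      linarith
    calc ν (Set.Ioc u v) ≤ ENNReal.ofReal (v - u) := h1.trans h2.le
      _ < m := lt_of_le_of_lt h3 h4
      _ ≤ δ' := min_le_left _ _
  have hlint := hδ' (Set.Ioc u v) hmeas
  have hrestr : ν.restrict (Set.Ioc u v) = volume.restrict (Set.Ioc u v) := by
    rw [hν, Measure.restrict_restrict measurableSet_Ioc,
      Set.inter_eq_self_of_subset_left hIoc]
  have heq : ∫⁻ x in Set.Ioc u v, ENNReal.ofReal (g x) ∂ν
      = ∫⁻ x in Set.Ioc u v, ENNReal.ofReal (g x) := by rw [hrestr]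
  rw [heq] at hlint
  have hgI : MeasureTheory.IntegrableOn g (Set.Ioc u v) := hg.mono_set hIoc
  rw [intervalIntegral.integral_of_le huv,
    MeasureTheory.integral_eq_lintegral_of_nonneg_ae
      (Filter.Eventually.of_forall hg0) hgI.1]
  exact ENNReal.toReal_le_of_le_ofReal hη.le hlint.le

/-- An AC curve (with the integral bound) is continuous on `[0,1]`. -/
lemma aux_cont {X : Type*} [MetricSpace X] {γ : ℝ → X} {g : ℝ → ℝ}
    (hg : MeasureTheory.IntegrableOn g (Set.Icc (0:ℝ) 1))
    (hgd : ∀ s t : ℝ, 0 ≤ s → s ≤ t → t ≤ 1 → dist (γ s) (γ t) ≤ ∫ r in s..t, g r) :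
    ContinuousOn γ (Set.Icc 0 1) := by
  have hII : ∀ a b : ℝ, 0 ≤ a → a ≤ b → b ≤ 1 → IntervalIntegrable g volume a b := by
    intro a b ha hab hb1
    exact (hg.mono_set
      (by rw [Set.uIcc_of_le hab]; exact Set.Icc_subset_Icc ha hb1)).intervalIntegrable
  set Q : ℝ → ℝ := fun x => ∫ r in Set.Ioc (0:ℝ) x, g r with hQdef
  have hQ : ContinuousOn Q (Set.Icc (0:ℝ) 1) := intervalIntegral.continuousOn_primitive hg
  have key : ∀ s ∈ Set.Icc (0:ℝ) 1, ∀ t ∈ Set.Icc (0:ℝ) 1,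
      dist (γ s) (γ t) ≤ dist (Q s) (Q t) := by
    have base : ∀ s t : ℝ, 0 ≤ s → s ≤ t → t ≤ 1 → dist (γ s) (γ t) ≤ dist (Q s) (Q t) := by
      intro s t hs hst ht1
      have hQs : Q s = ∫ r in (0:ℝ)..s, g r := (intervalIntegral.integral_of_le hs).symm
      have hQt : Q t = ∫ r in (0:ℝ)..t, g r :=
        (intervalIntegral.integral_of_le (hs.trans hst)).symm
      have hsub : Q t - Q s = ∫ r in s..t, g r := by
        rw [hQs, hQt]
        exact intervalIntegral.integral_interval_sub_left
          (hII 0 t le_rfl (hs.trans hst) ht1) (hII 0 s le_rfl hs (hst.trans ht1))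
      calc dist (γ s) (γ t) ≤ ∫ r in s..t, g r := hgd s t hs hst ht1
        _ = Q t - Q s := hsub.symm
        _ ≤ |Q t - Q s| := le_abs_self _
        _ = dist (Q s) (Q t) := by rw [Real.dist_eq, abs_sub_comm]
    intro s hs t ht
    rcases le_total s t with h | h
    · exact base s t hs.1 h ht.2
    · rw [dist_comm, dist_comm (Q s)]
      exact base t s ht.1 h hs.2
  intro t ht
  rw [Metric.continuousWithinAt_iff]
  intro ε hε
  obtain ⟨δ, hδ, hQδ⟩ := Metric.continuousWithinAt_iff.mp (hQ t ht) ε hε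
  exact ⟨δ, hδ, fun s hs hd => lt_of_le_of_lt (key s hs t ht) (hQδ hs hd)⟩

/-- Quadratic lower bound for a `λ`-convex function. -/
lemma aux_lower {X : Type*} [MetricSpace X] (hgeo : GeodesicSp X)
    {f : X → EReal} {lam : ℝ} (hbot : ∀ x, f x ≠ ⊥) (hconv : LambdaConvex f lam)
    {xb : X} (hxb : f xb ≠ ⊤) {c δ₀ : ℝ} (hδ₀ : 0 < δ₀)
    (hball : ∀ y, dist y xb < δ₀ → (c : EReal) < f y) :
    ∀ y, f y ≠ ⊤ →
      -(|c| + (2 * (|c| + |(f xb).toReal|) / δ₀) * dist y xb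
          + max (-lam) 0 / 2 * dist y xb ^ 2) ≤ (f y).toReal := by
  intro y hy
  set Fb := (f xb).toReal with hFbdef
  set Y := (f y).toReal with hYdef
  set D := dist y xb with hDdef
  have hD0 : 0 ≤ D := dist_nonneg
  have hlneg : max (-lam) 0 ≥ 0 := le_max_right _ _
  have hlneg' : -lam ≤ max (-lam) 0 := le_max_left _ _
  rcases lt_or_ge D δ₀ with hDlt | hDge
  · have h1 : (c : EReal) < f y := hball y hDlt
    have h2 : c ≤ Y := by
      have := EReal.toReal_le_toReal h1.le (EReal.coe_ne_bot c) hy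
      simpa using this
    have : -|c| ≤ c := neg_abs_le c
    nlinarith [abs_nonneg c, abs_nonneg Fb,
      mul_nonneg (mul_nonneg (by linarith [hlneg] : (0:ℝ) ≤ max (-lam) 0 / 2) hD0) hD0,
      mul_nonneg (div_nonneg (by positivity : (0:ℝ) ≤ 2*(|c|+|Fb|)) hδ₀.le) hD0]
  · have hDpos : 0 < D := lt_of_lt_of_le hδ₀ hDge
    obtain ⟨γ', hg, h0, h1⟩ := hgeo xb y
    set t := δ₀ / (2 * D) with htdef
    have ht0 : 0 < t := by positivity
    have ht2 : t ≤ 1 / 2 := by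
      rw [htdef, div_le_div_iff₀ (by positivity) (by norm_num)]
      nlinarith
    have htI : t ∈ Set.Icc (0:ℝ) 1 := ⟨ht0.le, by linarith⟩
    have hD01 : dist (γ' 0) (γ' 1) = D := by rw [h0, h1, dist_comm]
    have hdt : dist (γ' t) xb < δ₀ := by
      have e := hg t htI 0 ⟨le_rfl, zero_le_one⟩
      rw [hD01, h0] at e
      rw [e, abs_of_nonneg (by linarith : (0:ℝ) ≤ t - 0)]
      have : (t - 0) * D = δ₀ / 2 := by
        rw [htdef]; field_simp; ring
      rw [this]; linarith
    have hcγ : (c : EReal) < f (γ' t) := hball _ hdt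
    have hconvt := hconv γ' hg t htI
    rw [hD01, h0, h1] at hconvt
    have hfxb : f xb = ((Fb : ℝ) : EReal) := (EReal.coe_toReal hxb (hbot xb)).symm
    have hfy : f y = ((Y : ℝ) : EReal) := (EReal.coe_toReal hy (hbot y)).symm
    rw [hfxb, hfy, ← EReal.coe_mul, ← EReal.coe_mul, ← EReal.coe_add, ← EReal.coe_sub] at hconvt
    have hreal : c < (1 - t) * Fb + t * Y - lam / 2 * t * (1 - t) * D ^ 2 := by
      have := lt_of_lt_of_le hcγ hconvt
      exact_mod_cast this
    have key : t * Y ≥ -(|c| + |Fb|) - max (-lam) 0 / 2 * t * D ^ 2 := by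
      have e1 : (1 - t) * Fb ≤ |Fb| := by
        have : (1 - t) * Fb ≤ (1 - t) * |Fb| := by
          apply mul_le_mul_of_nonneg_left (le_abs_self Fb) (by linarith)
        nlinarith [abs_nonneg Fb]
      have e2 : lam / 2 * t * (1 - t) * D ^ 2 ≥ -(max (-lam) 0 / 2 * t * D ^ 2) := by
        nlinarith [mul_nonneg (mul_nonneg (by linarith [hlneg'] : (0:ℝ) ≤ lam + (-lam ⊔ 0))
            (mul_nonneg ht0.le (by linarith : (0:ℝ) ≤ 1 - t))) (sq_nonneg D),
          mul_nonneg (mul_nonneg hlneg (mul_nonneg ht0.le ht0.le)) (sq_nonneg D)]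
      nlinarith [neg_abs_le c]
    have htD : t * ((2 * (|c| + |Fb|) / δ₀) * D) = |c| + |Fb| := by
      rw [htdef]; field_simp
    have goal' : t * Y ≥
        t * (-(|c| + (2 * (|c| + |Fb|) / δ₀) * D + max (-lam) 0 / 2 * D ^ 2)) := by
      have ht3 : t * |c| ≥ 0 := mul_nonneg ht0.le (abs_nonneg c)
      calc t * (-(|c| + (2 * (|c| + |Fb|) / δ₀) * D + max (-lam) 0 / 2 * D ^ 2))
          = -(t * |c|) - t * ((2 * (|c| + |Fb|) / δ₀) * D)
            - t * (max (-lam) 0 / 2 * D ^ 2) := by ring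
        _ = -(t * |c|) - (|c| + |Fb|) - t * (max (-lam) 0 / 2 * D ^ 2) := by rw [htD]
        _ ≤ -(|c| + |Fb|) - max (-lam) 0 / 2 * t * D ^ 2 := by nlinarith
        _ ≤ t * Y := key
    have := le_of_mul_le_mul_left goal' ht0
    linarith [this]

end AuxLemmas

set_option maxHeartbeats 2000000 in
/-- Uniform convergence of the resolvents to the identity along a curve of finite action. -/
theorem statement15 {X : Type*} [MetricSpace X] [CompleteSpace X] (hX : IsCAT0 X)
    (f : X → EReal) (lam : ℝ)
    (hbot : ∀ x, f x ≠ ⊥) (hproper : ∃ x, f x ≠ ⊤)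
    (hconv : LambdaConvex f lam) (hlsc : LowerSemicontinuous f)
    (γ : ℝ → X) (hγ : IsACCurveOn γ 0 1) (hfin : actionIntegral f γ < ⊤) :
    ∀ ε : ℝ, 0 < ε → ∃ τ₀ : ℝ, 0 < τ₀ ∧ ∀ τ : ℝ, 0 < τ → τ ≤ τ₀ →
      ∀ t ∈ Set.Icc (0:ℝ) 1, ∀ u ∈ resolvSet f τ (γ t), dist u (γ t) < ε := by
  intro ε hε
  obtain ⟨g, hgint, hg0, hgd⟩ := hγ
  obtain ⟨xb, hxb⟩ := hproper
  have hγc : ContinuousOn γ (Set.Icc 0 1) := aux_cont hgint hgd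
  -- a ball around `xb` on which `f > c`
  have hfxb : f xb = (((f xb).toReal : ℝ) : EReal) := (EReal.coe_toReal hxb (hbot xb)).symm
  obtain ⟨c, hcdef⟩ : ∃ x : ℝ, x = (f xb).toReal - 1 := ⟨_, rfl⟩
  have hclt : (c : EReal) < f xb := by
    conv_rhs => rw [hfxb]
    exact EReal.coe_lt_coe_iff.mpr (by rw [hcdef]; linarith)
  obtain ⟨δ₀, hδ₀, hball⟩ := Metric.eventually_nhds_iff.mp (hlsc xb _ hclt)
  have hball' : ∀ y, dist y xb < δ₀ → (c : EReal) < f y := fun y hy => hball hy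
  -- constants
  have hlow0 : ∀ y, f y ≠ ⊤ →
      -(|c| + (2 * (|c| + |(f xb).toReal|) / δ₀) * dist y xb
        + max (-lam) 0 / 2 * dist y xb ^ 2) ≤ (f y).toReal :=
    aux_lower hX.1 hbot hconv hxb hδ₀ hball'
  obtain ⟨lneg, hlnegdef⟩ : ∃ x : ℝ, x = max (-lam) 0 := ⟨_, rfl⟩
  obtain ⟨C₁, hC₁def⟩ : ∃ x : ℝ, x = |c| := ⟨_, rfl⟩
  obtain ⟨C₂, hC₂def⟩ : ∃ x : ℝ, x = 2 * (|c| + |(f xb).toReal|) / δ₀ := ⟨_, rfl⟩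
  have hlneg0 : 0 ≤ lneg := by rw [hlnegdef]; exact le_max_right _ _
  have hC₁0 : 0 ≤ C₁ := by rw [hC₁def]; exact abs_nonneg _
  have hC₂0 : 0 ≤ C₂ := by rw [hC₂def]; positivity
  have hlow : ∀ y, f y ≠ ⊤ →
      -(C₁ + C₂ * dist y xb + lneg / 2 * dist y xb ^ 2) ≤ (f y).toReal := by
    rw [hlnegdef, hC₁def, hC₂def]; exact hlow0
  -- the curve stays in a bounded set
  have hII : ∀ a b : ℝ, 0 ≤ a → a ≤ b → b ≤ 1 → IntervalIntegrable g volume a b := by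
    intro a b ha hab hb1
    exact (hgint.mono_set
      (by rw [Set.uIcc_of_le hab]; exact Set.Icc_subset_Icc ha hb1)).intervalIntegrable
  obtain ⟨R, hRdef⟩ : ∃ x : ℝ, x = (∫ r in (0:ℝ)..1, g r) + dist (γ 0) xb := ⟨_, rfl⟩
  have hR0 : 0 ≤ R := by
    have h01 : 0 ≤ ∫ r in (0:ℝ)..1, g r :=
      intervalIntegral.integral_nonneg zero_le_one (fun x _ => hg0 x)
    have := dist_nonneg (x := γ 0) (y := xb)
    rw [hRdef]; linarith
  have hR : ∀ t ∈ Set.Icc (0:ℝ) 1, dist (γ t) xb ≤ R := by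
    intro t ht
    have h1 : dist (γ 0) (γ t) ≤ ∫ r in (0:ℝ)..t, g r := hgd 0 t le_rfl ht.1 ht.2
    have hsplit := intervalIntegral.integral_add_adjacent_intervals
      (hII 0 t le_rfl ht.1 ht.2) (hII t 1 ht.1 ht.2 le_rfl)
    have h3 : 0 ≤ ∫ r in t..1, g r :=
      intervalIntegral.integral_nonneg ht.2 (fun x _ => hg0 x)
    calc dist (γ t) xb ≤ dist (γ t) (γ 0) + dist (γ 0) xb := dist_triangle _ _ _
      _ = dist (γ 0) (γ t) + dist (γ 0) xb := by rw [dist_comm]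
      _ ≤ R := by rw [hRdef]; linarith
  -- uniform integrability
  obtain ⟨δ₁, hδ₁, hints⟩ := aux_unif_int hgint hg0 (show (0:ℝ) < ε/4 by linarith)
  obtain ⟨δ, hδdef⟩ : ∃ x : ℝ, x = min δ₁ (1/2) := ⟨_, rfl⟩
  have hδpos : 0 < δ := by rw [hδdef]; exact lt_min hδ₁ (by norm_num)
  have hδhalf : δ ≤ 1/2 := by rw [hδdef]; exact min_le_right _ _
  have hδ1 : δ ≤ δ₁ := by rw [hδdef]; exact min_le_left _ _
  -- the sublevel sets along the curve
  obtain ⟨A, hAdef⟩ : ∃ A : ℕ → Set ℝ,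
      A = fun n : ℕ => Set.Ioo (0:ℝ) 1 ∩ γ ⁻¹' (f ⁻¹' Set.Iic ((n : ℝ) : EReal)) := ⟨_, rfl⟩
  have hAmeas : ∀ n, MeasurableSet (A n) := by
    intro n
    have hcl : IsClosed (f ⁻¹' Set.Iic ((n:ℝ) : EReal)) :=
      lowerSemicontinuous_iff_isClosed_preimage.mp hlsc _
    have h2 : IsClosed (Set.Icc (0:ℝ) 1 ∩ γ ⁻¹' (f ⁻¹' Set.Iic ((n:ℝ) : EReal))) :=
      hγc.preimage_isClosed_of_isClosed isClosed_Icc hcl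
    have hAeq : A n = Set.Ioo (0:ℝ) 1 ∩
        (Set.Icc (0:ℝ) 1 ∩ γ ⁻¹' (f ⁻¹' Set.Iic ((n:ℝ) : EReal))) := by
      rw [hAdef]
      ext x
      constructor
      · rintro ⟨h1, h2⟩; exact ⟨h1, ⟨⟨h1.1.le, h1.2.le⟩, h2⟩⟩
      · rintro ⟨h1, h2⟩; exact ⟨h1, h2.2⟩
    rw [hAeq]
    exact measurableSet_Ioo.inter h2.measurableSet
  have hTtop : ∀ s ∈ Set.Ioo (0:ℝ) 1 \ ⋃ n, A n, f (γ s) = ⊤ := by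
    intro s hs
    by_contra hne
    apply hs.2
    refine Set.mem_iUnion.mpr ⟨⌈(f (γ s)).toReal⌉₊, ?_⟩
    rw [hAdef]
    refine ⟨hs.1, ?_⟩
    show f (γ s) ≤ ((_ : ℝ) : EReal)
    conv_lhs => rw [← EReal.coe_toReal hne (hbot _)]
    exact EReal.coe_le_coe_iff.mpr (Nat.le_ceil _)
  have hTmeas : MeasurableSet (Set.Ioo (0:ℝ) 1 \ ⋃ n, A n) :=
    measurableSet_Ioo.diff (MeasurableSet.iUnion hAmeas)
  have hT0 : volume (Set.Ioo (0:ℝ) 1 \ ⋃ n, A n) = 0 := by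
    by_contra h0
    have h1 : (∫⁻ s in Set.Ioo (0:ℝ) 1 \ ⋃ n, A n,
        (mSpeed γ s ^ 2 + descSlope f (γ s) ^ 2)) ≤ actionIntegral f γ := by
      rw [actionIntegral]
      exact lintegral_mono_set Set.diff_subset
    have h2 : (∫⁻ s in Set.Ioo (0:ℝ) 1 \ ⋃ n, A n,
        (mSpeed γ s ^ 2 + descSlope f (γ s) ^ 2))
        = ∫⁻ _ in Set.Ioo (0:ℝ) 1 \ ⋃ n, A n, (⊤ : ℝ≥0∞) := by
      apply MeasureTheory.setLIntegral_congr_fun hTmeas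
      simp only [Set.EqOn]
      intro s hs
      have hslope : descSlope f (γ s) = ⊤ := by rw [descSlope, if_pos (hTtop s hs)]
      rw [hslope]
      simp
    rw [h2, MeasureTheory.setLIntegral_const, ENNReal.top_mul h0] at h1
    exact hfin.ne (top_le_iff.mp h1)
  -- pick the level M
  have hmono : Monotone A := by
    intro m n hmn x hx
    rw [hAdef] at hx ⊢
    refine ⟨hx.1, ?_⟩
    have h := hx.2
    simp only [Set.mem_preimage, Set.mem_Iic] at h ⊢
    exact le_trans h (EReal.coe_le_coe_iff.mpr (by exact_mod_cast hmn))
  have hanti : Antitone (fun n => Set.Ioo (0:ℝ) 1 \ A n) :=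
    fun m n hmn => Set.diff_subset_diff_right (hmono hmn)
  have hiInt : ⋂ n, (Set.Ioo (0:ℝ) 1 \ A n) = Set.Ioo (0:ℝ) 1 \ ⋃ n, A n :=
    (Set.diff_iUnion _ _).symm
  have htend := MeasureTheory.tendsto_measure_iInter_atTop (μ := volume)
      (fun n => (measurableSet_Ioo.diff (hAmeas n)).nullMeasurableSet) hanti
      ⟨0, by
        refine ne_of_lt (lt_of_le_of_lt (measure_mono Set.diff_subset) ?_)
        rw [Real.volume_Ioo]
        exact ENNReal.ofReal_lt_top⟩
  rw [hiInt, hT0] at htend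
  have hev : ∀ᶠ n in atTop, volume (Set.Ioo (0:ℝ) 1 \ A n) < ENNReal.ofReal δ := by
    have := htend.eventually (gt_mem_nhds (show (0:ℝ≥0∞) < ENNReal.ofReal δ by
      simp [ENNReal.ofReal_pos, hδpos]))
    exact this
  obtain ⟨M, hM⟩ := hev.exists
  -- the selection of nearby points with bounded `f`-value
  have hsel : ∀ t ∈ Set.Icc (0:ℝ) 1, ∃ s, s ∈ A M ∧ |s - t| ≤ δ := by
    intro t ht
    obtain ⟨a, hadef⟩ : ∃ x : ℝ, x = min t (1 - δ) := ⟨_, rfl⟩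
    have ha0 : 0 ≤ a := by rw [hadef]; exact le_min ht.1 (by linarith)
    have ha1 : a + δ ≤ 1 := by
      have := min_le_right t (1 - δ); rw [hadef]; linarith
    have hat : a ≤ t := by rw [hadef]; exact min_le_left _ _
    have hta : t ≤ a + δ := by
      rcases le_total t (1 - δ) with h | h
      · rw [hadef, min_eq_left h]; linarith
      · rw [hadef, min_eq_right h]; linarith [ht.2]
    have hIsub : Set.Ioo a (a + δ) ⊆ Set.Ioo (0:ℝ) 1 := fun x hx =>
      ⟨lt_of_le_of_lt ha0 hx.1, lt_of_lt_of_le hx.2 ha1⟩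
    have hnsub : ¬ (Set.Ioo a (a + δ) ⊆ Set.Ioo (0:ℝ) 1 \ A M) := by
      intro hsub
      have hv : volume (Set.Ioo a (a + δ)) ≤ volume (Set.Ioo (0:ℝ) 1 \ A M) :=
        measure_mono hsub
      rw [Real.volume_Ioo, show a + δ - a = δ by ring] at hv
      exact absurd (lt_of_le_of_lt hv hM) (lt_irrefl _)
    obtain ⟨s, hsI, hsn⟩ := Set.not_subset.mp hnsub
    refine ⟨s, ?_, ?_⟩
    · by_contra h
      exact hsn ⟨hIsub hsI, h⟩
    · rw [abs_sub_le_iff]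
      constructor
      · linarith [hsI.1, hsI.2]
      · linarith [hsI.1, hsI.2]
  -- final constants
  obtain ⟨Bc, hBcdef⟩ : ∃ x : ℝ, x = C₂ + lneg * R := ⟨_, rfl⟩
  obtain ⟨Ac, hAcdef⟩ : ∃ x : ℝ, x = (M : ℝ) + C₁ + C₂ * R + lneg / 2 * R ^ 2 := ⟨_, rfl⟩
  have hBc0 : 0 ≤ Bc := by
    rw [hBcdef]; have := mul_nonneg hlneg0 hR0; linarith
  have hAc0 : 0 ≤ Ac := by
    rw [hAcdef]
    have h1 := mul_nonneg hC₂0 hR0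
    have h2 := mul_nonneg (by linarith : (0:ℝ) ≤ lneg/2) (sq_nonneg R)
    have h3 : (0:ℝ) ≤ (M:ℝ) := Nat.cast_nonneg M
    linarith
  refine ⟨min (min (1/(2*lneg+1)) (ε/(16*(Bc+1)))) (ε^2/(64*(Ac+1))), ?_, ?_⟩
  · apply lt_min
    apply lt_min
    · apply div_pos one_pos; linarith
    · apply div_pos hε; linarith
    · apply div_pos (by positivity); linarith
  intro τ hτpos hττ t ht u hu
  obtain ⟨s, hsA, hst⟩ := hsel t ht
  have hτ1 : τ ≤ 1/(2*lneg+1) :=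
    le_trans hττ (le_trans (min_le_left _ _) (min_le_left _ _))
  have hτ2 : τ ≤ ε/(16*(Bc+1)) :=
    le_trans hττ (le_trans (min_le_left _ _) (min_le_right _ _))
  have hτ3 : τ ≤ ε^2/(64*(Ac+1)) := le_trans hττ (min_le_right _ _)
  rw [hAdef] at hsA
  obtain ⟨hsIoo, hfsle'⟩ := hsA
  have hfsle : f (γ s) ≤ ((M : ℝ) : EReal) := hfsle'
  -- distance from γ s to γ t
  have habs := abs_sub_le_iff.mp hst
  have hd4 : dist (γ s) (γ t) ≤ ε/4 := by
    rcases le_total s t with h | h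
    · exact le_trans (hgd s t hsIoo.1.le h ht.2)
        (hints s t hsIoo.1.le h ht.2 (by linarith [habs.2]))
    · rw [dist_comm]
      exact le_trans (hgd t s ht.1 h hsIoo.2.le)
        (hints t s ht.1 h hsIoo.2.le (by linarith [habs.1]))
  -- the resolvent inequality against γ s
  have hres : f u + ((dist u (γ t) ^ 2 / (2 * τ) : ℝ) : EReal)
      ≤ f (γ s) + ((dist (γ s) (γ t) ^ 2 / (2 * τ) : ℝ) : EReal) := hu (γ s)
  have hfs_ne : f (γ s) ≠ ⊤ := fun h => by
    rw [h] at hfsle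
    exact (EReal.coe_ne_top _) (top_le_iff.mp hfsle)
  have hfγs : f (γ s) = (((f (γ s)).toReal : ℝ) : EReal) :=
    (EReal.coe_toReal hfs_ne (hbot _)).symm
  have hfu_ne : f u ≠ ⊤ := by
    intro h
    rw [h, hfγs, ← EReal.coe_add, EReal.top_add_coe] at hres
    exact (EReal.coe_ne_top _) (top_le_iff.mp hres)
  have hfu : f u = (((f u).toReal : ℝ) : EReal) := (EReal.coe_toReal hfu_ne (hbot _)).symm
  rw [hfu, hfγs, ← EReal.coe_add, ← EReal.coe_add] at hres
  have hkey0 : (f u).toReal + dist u (γ t) ^ 2 / (2*τ)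
      ≤ (f (γ s)).toReal + dist (γ s) (γ t) ^ 2 / (2*τ) :=
    EReal.coe_le_coe_iff.mp hres
  have hMsle0 : (f (γ s)).toReal ≤ (M : ℝ) := by
    have := EReal.toReal_le_toReal hfsle (hbot _) (EReal.coe_ne_top _)
    rw [EReal.toReal_coe] at this; exact this
  have hUlow0 : -(C₁ + C₂ * dist u xb + lneg / 2 * dist u xb ^ 2) ≤ (f u).toReal :=
    hlow u hfu_ne
  have hux0 : dist u xb ≤ dist u (γ t) + R := by
    have h1 := dist_triangle u (γ t) xb
    have h2 := hR t ht
    linarith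
  -- opaque real variables
  obtain ⟨r, hrdef⟩ : ∃ x : ℝ, x = dist u (γ t) := ⟨_, rfl⟩
  obtain ⟨d, hddef⟩ : ∃ x : ℝ, x = dist (γ s) (γ t) := ⟨_, rfl⟩
  obtain ⟨U, hUdef⟩ : ∃ x : ℝ, x = (f u).toReal := ⟨_, rfl⟩
  obtain ⟨Ms, hMsdef⟩ : ∃ x : ℝ, x = (f (γ s)).toReal := ⟨_, rfl⟩
  obtain ⟨W, hWdef⟩ : ∃ x : ℝ, x = dist u xb := ⟨_, rfl⟩
  rw [← hrdef, ← hddef, ← hUdef, ← hMsdef] at hkey0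
  rw [← hMsdef] at hMsle0
  rw [← hUdef, ← hWdef] at hUlow0
  rw [← hrdef, ← hWdef] at hux0
  rw [← hddef] at hd4
  rw [← hrdef]
  have hr0 : 0 ≤ r := by rw [hrdef]; exact dist_nonneg
  have hd0 : 0 ≤ d := by rw [hddef]; exact dist_nonneg
  have hW0 : 0 ≤ W := by rw [hWdef]; exact dist_nonneg
  have hUlow : -(C₁ + C₂ * (r + R) + lneg / 2 * (r + R) ^ 2) ≤ U := by
    have hsq : W ^ 2 ≤ (r + R) ^ 2 := pow_le_pow_left₀ hW0 hux0 2
    have h3 := mul_le_mul_of_nonneg_left hux0 hC₂0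
    have h4 := mul_le_mul_of_nonneg_left hsq (by linarith : (0:ℝ) ≤ lneg / 2)
    linarith
  -- final contradiction
  by_contra hcon
  push_neg at hcon
  have h2τ : (0:ℝ) < 2 * τ := by linarith
  have h1' : U * (2*τ) + r ^ 2 ≤ Ms * (2*τ) + d ^ 2 := by
    calc U * (2*τ) + r^2 = (U + r^2/(2*τ)) * (2*τ) := by field_simp
      _ ≤ (Ms + d^2/(2*τ)) * (2*τ) := mul_le_mul_of_nonneg_right hkey0 h2τ.le
      _ = Ms * (2*τ) + d^2 := by field_simp
  have hQ : Ms - U ≤ (M:ℝ) + C₁ + C₂ * (r + R) + lneg / 2 * (r + R) ^ 2 := by linarith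
  have hr2 : r ^ 2 ≤ 2*τ*((M:ℝ) + C₁ + C₂*(r+R) + lneg/2*(r+R)^2) + d ^ 2 := by
    have h5 := mul_le_mul_of_nonneg_left hQ (by linarith : (0:ℝ) ≤ 2*τ)
    linarith [h1', h5]
  have ht1 : τ * lneg * r ^ 2 ≤ r ^ 2 / 2 := by
    have h2l : (0:ℝ) < 2*lneg + 1 := by linarith
    have h6 : τ * (2*lneg+1) ≤ 1 := by
      calc τ * (2*lneg+1) ≤ (1/(2*lneg+1)) * (2*lneg+1) :=
            mul_le_mul_of_nonneg_right hτ1 h2l.le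
        _ = 1 := by field_simp
    have hτl : τ * lneg ≤ 1/2 := by linarith [h6, hτpos.le]
    have := mul_le_mul_of_nonneg_right hτl (sq_nonneg r)
    linarith [this]
  have ht2' : 2*τ*Bc*r ≤ ε/8 * r := by
    have h16 : (0:ℝ) < 16*(Bc+1) := by linarith
    have h7 : τ * (16*(Bc+1)) ≤ ε := by
      calc τ * (16*(Bc+1)) ≤ (ε/(16*(Bc+1))) * (16*(Bc+1)) :=
            mul_le_mul_of_nonneg_right hτ2 h16.le
        _ = ε := by field_simp
    have hτB : 2*τ*Bc ≤ ε/8 := by linarith [h7, hτpos.le]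
    exact mul_le_mul_of_nonneg_right hτB hr0
  have ht3' : 2*τ*Ac ≤ ε^2/32 := by
    have h64 : (0:ℝ) < 64*(Ac+1) := by linarith
    have h8 : τ * (64*(Ac+1)) ≤ ε^2 := by
      calc τ * (64*(Ac+1)) ≤ (ε^2/(64*(Ac+1))) * (64*(Ac+1)) :=
            mul_le_mul_of_nonneg_right hτ3 h64.le
        _ = ε^2 := by field_simp
    linarith [h8, hτpos.le]
  have hd2 : d ^ 2 ≤ ε^2/16 := by
    have h9 := pow_le_pow_left₀ hd0 hd4 2
    have h10 : (ε/4) ^ 2 = ε^2/16 := by ring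
    linarith [h9]
  have hexp : 2*τ*((M:ℝ) + C₁ + C₂*(r+R) + lneg/2*(r+R)^2)
      = 2*τ*Ac + 2*τ*Bc*r + τ*lneg*r^2 := by
    rw [hAcdef, hBcdef]; ring
  rw [hexp] at hr2
  linarith [hr2, ht1, ht2', ht3', hd2,
    mul_le_mul_of_nonneg_right hcon hr0, mul_le_mul_of_nonneg_left hcon hε.le,
    mul_pos hε (lt_of_lt_of_le hε hcon)]
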